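/- Let a ≥ 0 be a real number and α, γ, δ real numbers with α > -1, δ > -1, γ + δ + a + 1 > -1, and let β be a nonnegative integer. Then ∫_0^1 ∫_0^{t₁} (1-t₁)^α (1-t₂)^β t₁^γ t₂^δ (t₁-t₂)^a dt₂ dt₁ = Σ_{j=0}^β ((-β)_j / j!) · B(α+1, j+γ+δ+a+2) · B(a+1, j+δ+1). -/

import Mathlib

/-- Pochhammer symbol `(x)_k` on the reals. -/
noncomputable def poch (x : ℝ) (k : ℕ) : ℝ := (ascPochhammer ℝ k).eval x

/-- Euler Beta function `B(p,q) = Γ(p)Γ(q)/Γ(p+q)`. -/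
noncomputable def betaFn (p q : ℝ) : ℝ := Real.Gamma p * Real.Gamma q / Real.Gamma (p + q)

lemma betaFn_symm (p q : ℝ) : betaFn p q = betaFn q p := by
  rw [betaFn, betaFn, add_comm, mul_comm]

lemma beta_intble {p q : ℝ} (hp : -1 < p) (hq : -1 < q) :
    IntervalIntegrable (fun x : ℝ => x ^ p * (1 - x) ^ q) MeasureTheory.volume 0 1 := by
  have h := Complex.betaIntegral_convergent (u := p + 1) (v := q + 1)
    (by simp; linarith) (by simp; linarith)
  have h2 : IntervalIntegrable (fun x : ℝ =>
      (((x : ℂ) ^ ((p : ℂ) + 1 - 1) * (1 - (x : ℂ)) ^ ((q : ℂ) + 1 - 1)).re))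
      MeasureTheory.volume 0 1 := by
    constructor
    · exact (h.1).re
    · exact (h.2).re
  rw [intervalIntegrable_iff_integrableOn_Ioc_of_le (by norm_num)] at h2 ⊢
  refine h2.congr_fun (fun x hx => ?_) measurableSet_Ioc
  have hx0 : (0:ℝ) ≤ x := le_of_lt hx.1
  have hx1 : (0:ℝ) ≤ 1 - x := by linarith [hx.2]
  beta_reduce
  rw [show (p:ℂ) + 1 - 1 = (p:ℂ) by ring, show (q:ℂ) + 1 - 1 = (q:ℂ) by ring,
    ← Complex.ofReal_cpow hx0, ← Complex.ofReal_one, ← Complex.ofReal_sub,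
    ← Complex.ofReal_cpow hx1, ← Complex.ofReal_mul, Complex.ofReal_re]

lemma beta_eval {p q : ℝ} (hp : -1 < p) (hq : -1 < q) :
    ∫ x in (0:ℝ)..1, x ^ p * (1 - x) ^ q = betaFn (p + 1) (q + 1) := by
  have hs : 0 < Complex.re ((p:ℂ) + 1) := by simp; linarith
  have ht : 0 < Complex.re ((q:ℂ) + 1) := by simp; linarith
  have h := Complex.Gamma_mul_Gamma_eq_betaIntegral hs ht
  have hGne : Real.Gamma (p + 1 + (q + 1)) ≠ 0 :=
    (Real.Gamma_pos_of_pos (by linarith)).ne'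
  have hbi : Complex.betaIntegral ((p:ℂ) + 1) ((q:ℂ) + 1)
      = ((∫ x in (0:ℝ)..1, x ^ p * (1 - x) ^ q : ℝ) : ℂ) := by
    rw [Complex.betaIntegral, ← intervalIntegral.integral_ofReal]
    refine intervalIntegral.integral_congr (fun x hx => ?_)
    rw [Set.uIcc_of_le (by norm_num : (0:ℝ) ≤ 1)] at hx
    have hx0 : (0:ℝ) ≤ x := hx.1
    have hx1 : (0:ℝ) ≤ 1 - x := by linarith [hx.2]
    rw [show (p:ℂ) + 1 - 1 = (p:ℂ) by ring, show (q:ℂ) + 1 - 1 = (q:ℂ) by ring,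
      ← Complex.ofReal_cpow hx0, ← Complex.ofReal_one, ← Complex.ofReal_sub,
      ← Complex.ofReal_cpow hx1, ← Complex.ofReal_mul]
  rw [hbi, show ((p:ℂ)+1) = ((p+1:ℝ):ℂ) by push_cast; ring,
    show ((q:ℂ)+1) = ((q+1:ℝ):ℂ) by push_cast; ring, ← Complex.ofReal_add,
    Complex.Gamma_ofReal, Complex.Gamma_ofReal, Complex.Gamma_ofReal] at h
  have h' : Real.Gamma (p+1) * Real.Gamma (q+1)
      = Real.Gamma (p+1+(q+1)) * ∫ x in (0:ℝ)..1, x ^ p * (1 - x) ^ q := by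
    exact_mod_cast h
  rw [betaFn, h', mul_comm, mul_div_assoc, div_self hGne, mul_one]

lemma scaled_ptwise {p q c : ℝ} (hc : 0 < c) {x : ℝ} (hx0 : 0 ≤ x) (hxc : x ≤ c) :
    x ^ p * (c - x) ^ q = c ^ (p + q) * ((c⁻¹ * x) ^ p * (1 - c⁻¹ * x) ^ q) := by
  have h1 : (1 : ℝ) - c⁻¹ * x = (c - x) / c := by field_simp
  have h2 : c⁻¹ * x = x / c := by field_simp
  rw [h1, h2, Real.div_rpow hx0 hc.le, Real.div_rpow (by linarith) hc.le,
    Real.rpow_add hc]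
  have hp0 : c ^ p ≠ 0 := (Real.rpow_pos_of_pos hc p).ne'
  have hq0 : c ^ q ≠ 0 := (Real.rpow_pos_of_pos hc q).ne'
  field_simp

lemma scaled_intble {p q c : ℝ} (hp : -1 < p) (hq : -1 < q) (hc : 0 < c) :
    MeasureTheory.IntegrableOn (fun x : ℝ => x ^ p * (c - x) ^ q) (Set.Ioo 0 c) := by
  have h := ((beta_intble hp hq).comp_mul_left (c := c⁻¹) enorm_ne_top enorm_ne_top).const_mul (c ^ (p + q))
  rw [show (1:ℝ)/c⁻¹ = c by field_simp, zero_div] at h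
  rw [intervalIntegrable_iff_integrableOn_Ioc_of_le hc.le] at h
  refine ((h.mono_set Set.Ioo_subset_Ioc_self).congr_fun (fun x hx => ?_)
    measurableSet_Ioo)
  exact (scaled_ptwise hc hx.1.le hx.2.le).symm

lemma scaled_eval {p q c : ℝ} (hp : -1 < p) (hq : -1 < q) (hc : 0 < c) :
    ∫ x in Set.Ioo (0:ℝ) c, x ^ p * (c - x) ^ q
      = c ^ (p + q + 1) * betaFn (p + 1) (q + 1) := by
  rw [← MeasureTheory.integral_Ioc_eq_integral_Ioo,
    ← intervalIntegral.integral_of_le hc.le]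
  have h1 : ∫ x in (0:ℝ)..c, x ^ p * (c - x) ^ q
      = ∫ x in (0:ℝ)..c, c ^ (p + q) * ((c⁻¹ * x) ^ p * (1 - c⁻¹ * x) ^ q) := by
    refine intervalIntegral.integral_congr (fun x hx => ?_)
    rw [Set.uIcc_of_le hc.le] at hx
    exact scaled_ptwise hc hx.1 hx.2
  rw [h1, intervalIntegral.integral_const_mul,
    intervalIntegral.integral_comp_mul_left
      (fun y => y ^ p * (1 - y) ^ q) (inv_ne_zero hc.ne'),
    mul_zero, inv_mul_cancel₀ hc.ne', inv_inv, beta_eval hp hq, smul_eq_mul]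
  rw [Real.rpow_add hc (p+q) 1, Real.rpow_add hc p q, Real.rpow_one]
  ring

lemma poch_coeff (β j : ℕ) :
    poch (-(β : ℝ)) j / j.factorial = (-1 : ℝ) ^ j * (β.choose j) := by
  rw [poch, ascPochhammer_eval_neg_eq_descPochhammer,
    show ((β : ℝ)) = ((β : ℕ) : ℝ) from rfl,
    descPochhammer_eval_eq_descFactorial,
    Nat.descFactorial_eq_factorial_mul_choose]
  push_cast
  rw [mul_div_assoc, mul_comm (j.factorial : ℝ), mul_div_assoc,
    div_self (by exact_mod_cast j.factorial_ne_zero), mul_one]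

lemma binom_expand (β : ℕ) (t : ℝ) :
    (1 - t) ^ β = ∑ j ∈ Finset.range (β + 1), (-1 : ℝ) ^ j * (β.choose j) * t ^ j := by
  rw [sub_eq_add_neg, add_comm, add_pow]
  refine Finset.sum_congr rfl (fun j hj => ?_)
  rw [neg_pow]
  ring

lemma inner_eval (a : ℝ) (ha : 0 ≤ a) (α γ δ : ℝ) (hδ : -1 < δ) (β : ℕ)
    {t1 : ℝ} (ht : t1 ∈ Set.Ioo (0:ℝ) 1) :
    (∫ t2 in Set.Ioo (0 : ℝ) t1,
        (1 - t1) ^ α * (1 - t2) ^ (β : ℕ) * t1 ^ γ * t2 ^ δ * (t1 - t2) ^ a)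
      = ∑ j ∈ Finset.range (β + 1),
          ((-1 : ℝ) ^ j * (β.choose j) * betaFn (δ + j + 1) (a + 1)) *
            ((1 - t1) ^ α * t1 ^ γ * t1 ^ (δ + j + a + 1)) := by
  have ht1 : 0 < t1 := ht.1
  have step1 : ∀ t2 ∈ Set.Ioo (0:ℝ) t1,
      (1 - t1) ^ α * (1 - t2) ^ (β : ℕ) * t1 ^ γ * t2 ^ δ * (t1 - t2) ^ a
        = ∑ j ∈ Finset.range (β + 1),
            ((-1 : ℝ) ^ j * (β.choose j) * ((1 - t1) ^ α * t1 ^ γ)) *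
              (t2 ^ (δ + j) * (t1 - t2) ^ a) := by
    intro t2 ht2
    rw [binom_expand, Finset.mul_sum, Finset.sum_mul, Finset.sum_mul, Finset.sum_mul]
    refine Finset.sum_congr rfl (fun j hj => ?_)
    rw [show t2 ^ (δ + (j:ℝ)) = t2 ^ δ * t2 ^ (j:ℝ) from Real.rpow_add ht2.1 _ _,
      Real.rpow_natCast]
    ring
  rw [MeasureTheory.setIntegral_congr_fun measurableSet_Ioo step1]
  rw [MeasureTheory.integral_finset_sum]
  · refine Finset.sum_congr rfl (fun j hj => ?_)
    rw [MeasureTheory.integral_const_mul,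
      scaled_eval (by linarith : (-1:ℝ) < δ + j) (by linarith) ht1]
    ring
  · intro j hj
    exact (scaled_intble (by linarith : (-1:ℝ) < δ + j) (by linarith) ht1).const_mul _

theorem stmt5 (a : ℝ) (ha : 0 ≤ a) (α γ δ : ℝ) (hα : -1 < α) (hδ : -1 < δ)
    (hγδ : -1 < γ + δ + a + 1) (β : ℕ) :
    (∫ t1 in Set.Ioo (0 : ℝ) 1, ∫ t2 in Set.Ioo (0 : ℝ) t1,
        (1 - t1) ^ α * (1 - t2) ^ (β : ℕ) * t1 ^ γ * t2 ^ δ * (t1 - t2) ^ a) =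
      ∑ j ∈ Finset.range (β + 1),
        poch (-(β : ℝ)) j / j.factorial *
          betaFn (α + 1) ((j : ℝ) + γ + δ + a + 2) * betaFn (a + 1) ((j : ℝ) + δ + 1) := by
  have step1 : ∀ t1 ∈ Set.Ioo (0:ℝ) 1,
      (∫ t2 in Set.Ioo (0 : ℝ) t1,
        (1 - t1) ^ α * (1 - t2) ^ (β : ℕ) * t1 ^ γ * t2 ^ δ * (t1 - t2) ^ a)
      = ∑ j ∈ Finset.range (β + 1),
          ((-1 : ℝ) ^ j * (β.choose j) * betaFn (δ + j + 1) (a + 1)) *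
            (t1 ^ (γ + δ + j + a + 1) * (1 - t1) ^ α) := by
    intro t1 ht
    rw [inner_eval a ha α γ δ hδ β ht]
    refine Finset.sum_congr rfl (fun j hj => ?_)
    rw [show t1 ^ (γ + δ + (j:ℝ) + a + 1) = t1 ^ γ * t1 ^ (δ + j + a + 1) by
      rw [← Real.rpow_add ht.1]; ring_nf]
    ring
  rw [MeasureTheory.setIntegral_congr_fun measurableSet_Ioo step1,
    MeasureTheory.integral_finset_sum]
  · refine Finset.sum_congr rfl (fun j hj => ?_)
    rw [MeasureTheory.integral_const_mul,
      scaled_eval (by linarith : (-1:ℝ) < γ + δ + j + a + 1) hα one_pos,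
      Real.one_rpow, one_mul, poch_coeff,
      betaFn_symm (a+1), show ((j:ℝ) + δ + 1) = δ + j + 1 by ring,
      betaFn_symm (α+1), show ((j:ℝ) + γ + δ + a + 2) = γ + δ + j + a + 1 + 1 by ring]
    ring
  · intro j hj
    exact (scaled_intble (by linarith : (-1:ℝ) < γ + δ + j + a + 1) hα one_pos).const_mul _
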